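/- Let Σ be a closed surface and suppose that for every point x ∈ Σ there is a one-dimensional space of eigenfunctions vanishing to order exactly n at x, defining a continuous section of the bundle of 2n-stars E_Σ(2n). If the Euler number of E_Σ(2n) (or of its pullback to the orientation double cover) is nonzero, then no such continuous section exists, contradiction. In particular, for Σ = RP² the pullback to S² has Euler number 4n ≠ 0, so such a family of eigenfunctions cannot exist. -/

import Mathlib

open Complex Real

/-- A continuous function on an interval taking values in `2πℤ` is constant. -/
lemma helperA {c : ℝ → ℝ} {a b : ℝ} (hab : a ≤ b) (hc : ContinuousOn c (Set.Icc a b))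
    (h : ∀ s ∈ Set.Icc a b, ∃ k : ℤ, c s = 2 * π * k) : c a = c b := by
  by_contra hne
  obtain ⟨ka, hka⟩ := h a ⟨le_refl a, hab⟩
  obtain ⟨kb, hkb⟩ := h b ⟨hab, le_refl b⟩
  have hpi := Real.pi_pos
  rcases lt_or_gt_of_ne hne with hlt | hlt
  · have hk : (ka : ℝ) < kb := by nlinarith
    have hk' : (ka : ℝ) + 1 ≤ kb := by exact_mod_cast Int.add_one_le_iff.mpr (by exact_mod_cast hk)
    have hmem : c a + π ∈ Set.Icc (c a) (c b) := ⟨by linarith, by nlinarith⟩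
    obtain ⟨t, ht, hct⟩ := intermediate_value_Icc hab hc hmem
    obtain ⟨k, hk2⟩ := h t ht
    have : π * (2 * k) = π * (2 * ka + 1) := by nlinarith
    have h2 : (2 * k : ℝ) = 2 * ka + 1 := mul_left_cancel₀ (ne_of_gt hpi) this
    have : (2 * k : ℤ) = 2 * ka + 1 := by exact_mod_cast h2
    omega
  · have hk : (kb : ℝ) < ka := by nlinarith
    have hk' : (kb : ℝ) + 1 ≤ ka := by exact_mod_cast Int.add_one_le_iff.mpr (by exact_mod_cast hk)
    have hmem : c b + π ∈ Set.Icc (c b) (c a) := ⟨by linarith, by nlinarith⟩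
    obtain ⟨t, ht, hct⟩ := intermediate_value_Icc' hab hc hmem
    obtain ⟨k, hk2⟩ := h t ht
    have : π * (2 * k) = π * (2 * kb + 1) := by nlinarith
    have h2 : (2 * k : ℝ) = 2 * kb + 1 := mul_left_cancel₀ (ne_of_gt hpi) this
    have : (2 * k : ℤ) = 2 * kb + 1 := by exact_mod_cast h2
    omega


lemma real_of_exp_eq_one {x : ℝ} (h : Complex.exp (x * Complex.I) = 1) :
    ∃ k : ℤ, x = 2 * π * k := by
  obtain ⟨k, hk⟩ := Complex.exp_eq_one_iff.mp h
  refine ⟨k, ?_⟩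
  have h2 : (x : ℂ) * I = (2 * π * k : ℝ) * I := by rw [hk]; push_cast; ring
  have h3 : (x : ℂ) = ((2 * π * k : ℝ) : ℂ) := mul_right_cancel₀ Complex.I_ne_zero h2
  exact_mod_cast h3



lemma prod_ratio' {g : ℕ → ℂ} (hg : ∀ j, g j ≠ 0) (N : ℕ) :
    (∏ j ∈ Finset.range N, g (j + 1) / g j) = g N / g 0 := by
  induction N with
  | zero => simp [div_self (hg 0)]
  | succ N ih =>
      rw [Finset.prod_range_succ, ih, div_mul_div_comm, mul_comm (g N) (g (N + 1)),
        mul_div_mul_right _ _ (hg N)]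

lemma exp_arg_of_norm_one' {z : ℂ} (hz : ‖z‖ = 1) : Complex.exp (z.arg * Complex.I) = z := by
  have h := Complex.norm_mul_exp_arg_mul_I z
  rw [show ‖z‖ = 1 from hz] at h
  simpa using h

lemma re_half_of_close' {r : ℂ} (hr : ‖r‖ = 1) (h : ‖r - 1‖ < 1) : 1 / 2 < r.re := by
  have h2 : Complex.normSq (r - 1) < 1 := by
    rw [← Complex.sq_norm]
    nlinarith [norm_nonneg (r - 1), (show ‖r - 1‖ < 1 from h)]
  have h3 : Complex.normSq r = 1 := by
    rw [← Complex.sq_norm, show ‖r‖ = 1 from hr]; norm_num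
  simp [Complex.normSq_apply, Complex.sub_re, Complex.sub_im] at h2 h3
  nlinarith

/-- Continuous argument lifting on `[0,1]` for a unit-circle valued function with
a modulus of continuity at scale 1. -/
lemma exists_lift {f : ℝ → ℂ} (hf : Continuous f) (hnorm : ∀ t, ‖f t‖ = 1)
    (hδ : ∃ δ > 0, ∀ x y : ℝ, dist x y < δ → dist (f x) (f y) < 1) :
    ∃ θ : ℝ → ℝ, Continuous θ ∧
      ∀ t ∈ Set.Icc (0 : ℝ) 1, f t = Complex.exp (θ t * Complex.I) := by
  obtain ⟨δ, hδ0, hstep⟩ := hδ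
  obtain ⟨N, hN⟩ := exists_nat_one_div_lt hδ0
  set M : ℕ := N + 1 with hM
  have hM0 : (0 : ℝ) < M := by positivity
  have h1M : (1 : ℝ) / M < δ := by
    have : ((M : ℝ)) = (N : ℝ) + 1 := by push_cast [hM]; ring
    rw [this]; exact hN
  have hfne : ∀ t, f t ≠ 0 := fun t => by
    intro h; have h2 := hnorm t; rw [h] at h2; simp at h2
  set d : ℕ → ℝ → ℝ := fun j t => min t ((j : ℝ) / M) with hd
  set r : ℕ → ℝ → ℂ := fun j t => f (d (j + 1) t) / f (d j t) with hr
  have hab : ∀ j : ℕ, (j : ℝ) / M ≤ ((j : ℕ) + 1 : ℕ) / M := by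
    intro j; push_cast; gcongr <;> linarith
  have hdist : ∀ (j : ℕ) (t : ℝ), dist (d (j + 1) t) (d j t) < δ := by
    intro j t
    have hlow : d j t ≤ d (j + 1) t := min_le_min le_rfl (hab j)
    have hupp : d (j + 1) t ≤ d j t + 1 / M := by
      rcases le_total t ((j : ℝ) / M) with h | h
      · have e1 : d (j + 1) t = t := min_eq_left (le_trans h (hab j))
        have e2 : d j t = t := min_eq_left h
        rw [e1, e2]; have := one_div_pos.mpr hM0; linarith
      · have e2 : d j t = (j : ℝ) / M := min_eq_right h
        rw [e2]
        calc d (j + 1) t ≤ ((j : ℕ) + 1 : ℕ) / M := min_le_right _ _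
          _ = (j : ℝ) / M + 1 / M := by push_cast; ring
    rw [Real.dist_eq, abs_lt]
    constructor <;> linarith
  have hclose : ∀ (j : ℕ) (t : ℝ), ‖r j t - 1‖ < 1 := by
    intro j t
    have e : r j t - 1 = (f (d (j + 1) t) - f (d j t)) / f (d j t) :=
      div_sub_one (hfne _)
    rw [e, norm_div, hnorm, div_one, ← dist_eq_norm]
    exact hstep _ _ (hdist j t)
  have hrnorm : ∀ (j : ℕ) (t : ℝ), ‖r j t‖ = 1 := by
    intro j t; rw [hr]; simp [norm_div, hnorm]
  have hslit : ∀ (j : ℕ) (t : ℝ), r j t ∈ Complex.slitPlane := fun j t =>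
    Or.inl (by linarith [re_half_of_close' (hrnorm j t) (hclose j t)])
  have hdcont : ∀ j : ℕ, Continuous (d j) := fun j => continuous_id.min continuous_const
  have hrcont : ∀ j : ℕ, Continuous (r j) := fun j =>
    ((hf.comp (hdcont (j + 1))).div (hf.comp (hdcont j))) fun t => hfne _
  refine ⟨fun t => (f 0).arg + ∑ j ∈ Finset.range M, (r j t).arg, ?_, ?_⟩
  · refine continuous_const.add (continuous_finset_sum _ fun j _ => ?_)
    rw [continuous_iff_continuousAt]
    intro t
    exact (Complex.continuousAt_arg (hslit j t)).comp (hrcont j).continuousAt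
  · intro t ht
    have hdM : d M t = t := by
      have : ((M : ℝ)) / M = 1 := div_self (ne_of_gt hM0)
      rw [hd]; simp only []; rw [this]; exact min_eq_left ht.2
    have hd0 : d 0 t = 0 := by
      rw [hd]; simp only [Nat.cast_zero, zero_div]; exact min_eq_right ht.1
    have key : Complex.exp (((f 0).arg + ∑ j ∈ Finset.range M, (r j t).arg : ℝ) * Complex.I)
        = f 0 * ∏ j ∈ Finset.range M, r j t := by
      rw [Complex.ofReal_add, add_mul, Complex.exp_add, exp_arg_of_norm_one' (hnorm 0)]
      congr 1
      rw [Complex.ofReal_sum, Finset.sum_mul, Complex.exp_sum]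
      exact Finset.prod_congr rfl fun j _ => exp_arg_of_norm_one' (hrnorm j t)
    rw [key, prod_ratio' (g := fun j => f (d j t)) (fun j => hfne _) M, hdM, hd0,
      mul_comm, div_mul_cancel₀ _ (hfne 0)]


section aux

/-- clamp to `[0,1]` -/
noncomputable def myClamp (s : ℝ) : ℝ := max 0 (min s 1)

lemma myClamp_nonneg (s : ℝ) : 0 ≤ myClamp s := le_max_left _ _
lemma myClamp_le_one (s : ℝ) : myClamp s ≤ 1 := max_le zero_le_one (min_le_right _ _)
lemma myClamp_of_mem {s : ℝ} (h : s ∈ Set.Icc (0:ℝ) 1) : myClamp s = s := by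
  rw [myClamp, min_eq_left h.2, max_eq_right h.1]
lemma myClamp_zero : myClamp 0 = 0 := myClamp_of_mem ⟨le_refl 0, zero_le_one⟩
lemma myClamp_one : myClamp 1 = 1 := myClamp_of_mem ⟨zero_le_one, le_refl 1⟩
lemma myClamp_lipschitzWith : LipschitzWith 1 myClamp :=
  (LipschitzWith.id.min_const 1).const_max 0

lemma myClamp_lipschitz (a b : ℝ) : |myClamp a - myClamp b| ≤ |a - b| := by
  have := myClamp_lipschitzWith.dist_le_mul a b
  rwa [NNReal.coe_one, one_mul, Real.dist_eq, Real.dist_eq] at this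

lemma myClamp_continuous : Continuous myClamp :=
  continuous_const.max (continuous_id.min continuous_const)

/-- the standard loop -/
noncomputable def ecirc (t : ℝ) : ℂ := Complex.exp ((2 * π * t : ℝ) * Complex.I)

lemma ecirc_norm (t : ℝ) : ‖ecirc t‖ = 1 := Complex.norm_exp_ofReal_mul_I _

lemma ecirc_continuous : Continuous ecirc :=
  Complex.continuous_exp.comp
    ((Complex.continuous_ofReal.comp (continuous_const.mul continuous_id)).mul continuous_const)

lemma ecirc_zero : ecirc 0 = 1 := by simp [ecirc]
lemma ecirc_one : ecirc 1 = 1 := by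
  have : ((2 * π * 1 : ℝ) : ℂ) * Complex.I = 2 * π * Complex.I := by push_cast; ring
  rw [ecirc, this, Complex.exp_two_pi_mul_I]

lemma ecirc_dist {a b : ℝ} (h : 2 * π * |a - b| ≤ 1) :
    ‖ecirc a - ecirc b‖ ≤ 2 * (2 * π * |a - b|) := by
  have hsplit : ecirc a - ecirc b = ecirc b * (Complex.exp ((2 * π * (a - b) : ℝ) * Complex.I) - 1) := by
    simp only [ecirc, mul_sub, mul_one, ← Complex.exp_add]
    congr 2
    push_cast; ring
  have habs : ‖(((2 * π * (a - b) : ℝ)) * Complex.I)‖ = 2 * π * |a - b| := by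
    rw [norm_mul, Complex.norm_I, mul_one, Complex.norm_real, Real.norm_eq_abs, abs_mul]
    rw [abs_of_pos (by positivity : (0:ℝ) < 2 * π)]
  have := Complex.norm_exp_sub_one_le (x := ((2 * π * (a - b) : ℝ)) * Complex.I) (by rw [habs]; exact h)
  rw [hsplit, norm_mul, ecirc_norm, one_mul]
  calc ‖Complex.exp ((2 * π * (a - b) : ℝ) * Complex.I) - 1‖
      = ‖(Complex.exp ((2 * π * (a - b) : ℝ) * Complex.I) - 1)‖ := rfl
    _ ≤ 2 * ‖(((2 * π * (a - b) : ℝ)) * Complex.I)‖ := this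
    _ = 2 * (2 * π * |a - b|) := by rw [habs]

end aux

/-- Suppose a family of eigenfunctions (one-dimensional space
of eigenfunctions vanishing to order exactly `n` at each point `x ∈ RP²`)
defines a continuous section of the `2n`-star bundle `E_{RP²}(2n)`; pulling back
along the double cover `S² → RP²` gives a section of `E_{S²}(2n)`, a circle
bundle of Euler number `4n`.  In the clutching description (two trivial bundles
over hemisphere discs glued along the equator by `z ↦ z^(4n)`), such a section
is a pair of continuous unit-valued maps `u, v` on the closed disc with
`v z = z^(4n) · u z` on the boundary.  Since `4n ≠ 0`, no such pair exists,
hence the family of eigenfunctions cannot exist. -/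
theorem stmt_13 (n : ℕ) (hn : 0 < n) (eigenfamilyExists : Prop)
    (hsec : eigenfamilyExists →
      ∃ u v : {z : ℂ // ‖z‖ ≤ 1} → ℂ,
        Continuous u ∧ Continuous v ∧
        (∀ z, ‖u z‖ = 1 ∧ ‖v z‖ = 1) ∧
        (∀ z : {z : ℂ // ‖z‖ ≤ 1}, ‖(z : ℂ)‖ = 1 →
          v z = (z : ℂ) ^ (4 * n) * u z)) :
    ¬ eigenfamilyExists := by
  intro hex
  obtain ⟨u, v, hu, hv, hnorm, hbound⟩ := hsec hex
  set m : ℕ := 4 * n with hmdef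
  have hm1 : 1 ≤ m := by omega
  have hpi := Real.pi_pos
  -- the transition-function comparison map
  set w : {z : ℂ // ‖z‖ ≤ 1} → ℂ := fun z => v z * (starRingEnd ℂ) (u z) with hwdef
  have hwc : Continuous w := hv.mul (Complex.continuous_conj.comp hu)
  have hwn : ∀ z, ‖w z‖ = 1 := by
    intro z
    rw [hwdef]
    simp only [norm_mul, Complex.norm_conj]
    rw [(hnorm z).1, (hnorm z).2, one_mul]
  have hwb : ∀ z : {z : ℂ // ‖z‖ ≤ 1}, ‖(z : ℂ)‖ = 1 → w z = (z : ℂ) ^ m := by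
    intro z hz
    rw [hwdef]
    simp only []
    rw [hbound z hz, mul_assoc, Complex.mul_conj]
    have : Complex.normSq (u z) = 1 := by
      rw [Complex.normSq_eq_norm_sq, show ‖u z‖ = 1 from (hnorm z).1]; norm_num
    rw [this]
    push_cast
    rw [mul_one]
  -- compactness and uniform continuity
  have hset : Metric.closedBall (0 : ℂ) 1 = {z : ℂ | ‖z‖ ≤ 1} := by
    ext z; simp [Metric.mem_closedBall, dist_zero_right]
  haveI : CompactSpace {z : ℂ // ‖z‖ ≤ 1} := by
    have hcpt : IsCompact {z : ℂ | ‖z‖ ≤ 1} := by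
      rw [← hset]; exact isCompact_closedBall (0 : ℂ) 1
    exact isCompact_iff_compactSpace.mp hcpt
  have hwu : UniformContinuous w := CompactSpace.uniformContinuous_of_continuous hwc
  obtain ⟨δ₁, hδ₁0, hδ₁⟩ := Metric.uniformContinuous_iff.mp hwu 1 one_pos
  -- the family of loops
  set pt : ℝ → ℝ → {z : ℂ // ‖z‖ ≤ 1} := fun s t =>
    ⟨(myClamp s : ℂ) * ecirc t, by
      rw [norm_mul, ecirc_norm, mul_one, Complex.norm_real, Real.norm_eq_abs,
        _root_.abs_of_nonneg (myClamp_nonneg s)]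
      exact myClamp_le_one s⟩ with hptdef
  set W : ℝ → ℝ → ℂ := fun s t => w (pt s (myClamp t)) with hWdef
  have hWcont : ∀ s, Continuous fun t => W s t := by
    intro s
    apply hwc.comp
    apply Continuous.subtype_mk
    exact continuous_const.mul (ecirc_continuous.comp myClamp_continuous)
  have hWnorm : ∀ s t, ‖W s t‖ = 1 := fun s t => hwn _
  have hWne : ∀ s t, W s t ≠ 0 := by
    intro s t h; have := hWnorm s t; rw [h] at this; simp at this
  -- dist estimates
  have hptdist_t : ∀ s a b, dist (pt s a) (pt s b) ≤ ‖ecirc a - ecirc b‖ := by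
    intro s a b
    rw [Subtype.dist_eq, dist_eq_norm]
    simp only [hptdef]
    rw [← mul_sub, norm_mul, Complex.norm_real, Real.norm_eq_abs,
      _root_.abs_of_nonneg (myClamp_nonneg s)]
    calc myClamp s * ‖ecirc a - ecirc b‖ ≤ 1 * ‖ecirc a - ecirc b‖ := by
          apply mul_le_mul_of_nonneg_right (myClamp_le_one s) (norm_nonneg _)
      _ = ‖ecirc a - ecirc b‖ := one_mul _
  have hptdist_s : ∀ s s' t, dist (pt s t) (pt s' t) ≤ |s - s'| := by
    intro s s' t
    rw [Subtype.dist_eq, dist_eq_norm]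
    simp only [hptdef]
    rw [← sub_mul, norm_mul, ecirc_norm, mul_one, ← Complex.ofReal_sub, Complex.norm_real,
      Real.norm_eq_abs]
    exact myClamp_lipschitz s s'
  -- modulus of continuity for each loop
  set δ₂ : ℝ := min (δ₁ / (8 * π + 1)) (1 / (8 * π + 1)) with hδ₂def
  have hδ₂0 : 0 < δ₂ := lt_min (by positivity) (by positivity)
  have hest1 : ∀ s x y : ℝ, dist x y < δ₂ → dist (W s x) (W s y) < 1 := by
    intro s x y hxy
    rw [Real.dist_eq] at hxy
    have hc : |myClamp x - myClamp y| < δ₂ := lt_of_le_of_lt (myClamp_lipschitz x y) hxy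
    have hδ₂a : δ₂ ≤ δ₁ / (8 * π + 1) := min_le_left _ _
    have hδ₂b : δ₂ ≤ 1 / (8 * π + 1) := min_le_right _ _
    have habs : (0:ℝ) ≤ |myClamp x - myClamp y| := abs_nonneg _
    have hsmall : 2 * π * |myClamp x - myClamp y| ≤ 1 := by
      have hc2 : |myClamp x - myClamp y| * (8 * π + 1) ≤ 1 :=
        (le_div_iff₀ (by positivity)).mp (le_of_lt (lt_of_lt_of_le hc hδ₂b))
      nlinarith [mul_nonneg (by positivity : (0:ℝ) ≤ 6 * π + 1) habs]
    have hee : ‖ecirc (myClamp x) - ecirc (myClamp y)‖ ≤ 2 * (2 * π * |myClamp x - myClamp y|) :=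
      ecirc_dist hsmall
    have hptlt : dist (pt s (myClamp x)) (pt s (myClamp y)) < δ₁ := by
      apply lt_of_le_of_lt (le_trans (hptdist_t s _ _) hee)
      have hc3 : |myClamp x - myClamp y| * (8 * π + 1) < δ₁ :=
        (lt_div_iff₀ (by positivity)).mp (lt_of_lt_of_le hc hδ₂a)
      nlinarith [mul_nonneg (by positivity : (0:ℝ) ≤ 4 * π + 1) habs]
    exact hδ₁ hptlt
  have hest2 : ∀ s s' t : ℝ, |s - s'| < δ₁ → dist (W s t) (W s' t) < 1 := by
    intro s s' t h
    exact hδ₁ (lt_of_le_of_lt (hptdist_s s s' (myClamp t)) h)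
  -- lifts
  have hlift : ∀ s : ℝ, ∃ θ : ℝ → ℝ, Continuous θ ∧
      ∀ t ∈ Set.Icc (0:ℝ) 1, W s t = Complex.exp (θ t * Complex.I) :=
    fun s => exists_lift (hWcont s) (hWnorm s) ⟨δ₂, hδ₂0, hest1 s⟩
  set Θ : ℝ → ℝ → ℝ := fun s => (hlift s).choose with hΘdef
  have hΘc : ∀ s, Continuous (Θ s) := fun s => (hlift s).choose_spec.1
  have hΘe : ∀ s, ∀ t ∈ Set.Icc (0:ℝ) 1, W s t = Complex.exp (Θ s t * Complex.I) :=
    fun s => (hlift s).choose_spec.2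
  have h0mem : (0:ℝ) ∈ Set.Icc (0:ℝ) 1 := ⟨le_refl 0, zero_le_one⟩
  have h1mem : (1:ℝ) ∈ Set.Icc (0:ℝ) 1 := ⟨zero_le_one, le_refl 1⟩
  set NN : ℝ → ℝ := fun s => Θ s 1 - Θ s 0 with hNNdef
  -- loops are closed
  have hW10 : ∀ s, W s 1 = W s 0 := by
    intro s
    have : pt s (myClamp 1) = pt s (myClamp 0) := by
      apply Subtype.ext
      simp only [hptdef]
      rw [myClamp_one, myClamp_zero, ecirc_one, ecirc_zero]
    rw [hWdef]; simp only []; rw [this]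
  -- NN is 2π-integer-valued
  have hNNint : ∀ s, ∃ k : ℤ, NN s = 2 * π * k := by
    intro s
    apply real_of_exp_eq_one
    rw [hNNdef]
    simp only []
    rw [Complex.ofReal_sub, sub_mul, Complex.exp_sub, ← hΘe s 1 h1mem, ← hΘe s 0 h0mem,
      hW10 s, div_self (hWne s 0)]
  -- local constancy of NN
  have hlocal : ∀ s₀ s : ℝ, |s - s₀| < δ₁ → NN s = NN s₀ := by
    intro s₀ s hss
    set r : ℝ → ℂ := fun t => W s t / W s₀ t with hrdef
    have hrn : ∀ t, ‖r t‖ = 1 := by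
      intro t; rw [hrdef]; simp only [norm_div, hWnorm]; norm_num
    have hrne : ∀ t, r t ≠ 0 := by
      intro t h; have := hrn t; rw [h] at this; simp at this
    have hrclose : ∀ t, ‖r t - 1‖ < 1 := by
      intro t
      have e : r t - 1 = (W s t - W s₀ t) / W s₀ t := div_sub_one (hWne s₀ t)
      rw [e, norm_div, hWnorm, div_one, ← dist_eq_norm]
      exact hest2 s s₀ t hss
    have hslit : ∀ t, r t ∈ Complex.slitPlane := fun t =>
      Or.inl (by linarith [re_half_of_close' (hrn t) (hrclose t)])
    have hrcont : Continuous r := (hWcont s).div (hWcont s₀) fun t => hWne s₀ t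
    have hargcont : Continuous fun t => (r t).arg := by
      rw [continuous_iff_continuousAt]
      intro t
      exact (Complex.continuousAt_arg (hslit t)).comp hrcont.continuousAt
    set c : ℝ → ℝ := fun t => Θ s t - Θ s₀ t - (r t).arg with hcdef
    have hccont : Continuous c := ((hΘc s).sub (hΘc s₀)).sub hargcont
    have hcint : ∀ t ∈ Set.Icc (0:ℝ) 1, ∃ k : ℤ, c t = 2 * π * k := by
      intro t ht
      apply real_of_exp_eq_one
      rw [hcdef]
      simp only []
      rw [Complex.ofReal_sub, Complex.ofReal_sub, sub_mul, sub_mul, Complex.exp_sub,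
        Complex.exp_sub, ← hΘe s t ht, ← hΘe s₀ t ht, exp_arg_of_norm_one' (hrn t), hrdef]
      exact div_self (hrne t)
    have hc01 : c 0 = c 1 := helperA zero_le_one hccont.continuousOn hcint
    have hr10 : r 1 = r 0 := by rw [hrdef]; simp only []; rw [hW10 s, hW10 s₀]
    have harg10 : (r 1).arg = (r 0).arg := by rw [hr10]
    have e0 : c 0 = Θ s 0 - Θ s₀ 0 - (r 0).arg := rfl
    have e1 : c 1 = Θ s 1 - Θ s₀ 1 - (r 1).arg := rfl
    rw [hNNdef]
    simp only []
    rw [e0, e1] at hc01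
    linarith
  -- NN is continuous
  have hNNcont : Continuous NN := by
    rw [continuous_iff_continuousAt]
    intro s₀
    have hev : ∀ᶠ s in nhds s₀, NN s = NN s₀ := by
      apply Metric.eventually_nhds_iff.mpr
      exact ⟨δ₁, hδ₁0, fun {s} h => hlocal s₀ s (by rwa [← Real.dist_eq])⟩
    exact (continuousAt_congr (hev.mono fun s h => h.symm)).mp continuousAt_const
  -- NN 0 = 0
  have hNN0 : NN 0 = 0 := by
    have hW0 : ∀ t, W 0 t = W 0 0 := by
      intro t
      have : pt 0 (myClamp t) = pt 0 (myClamp 0) := by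
        apply Subtype.ext
        simp only [hptdef, myClamp_zero, Complex.ofReal_zero, zero_mul]
      rw [hWdef]; simp only []; rw [this]
    set c : ℝ → ℝ := fun t => Θ 0 t - Θ 0 0 with hcdef
    have hccont : Continuous c := (hΘc 0).sub continuous_const
    have hcint : ∀ t ∈ Set.Icc (0:ℝ) 1, ∃ k : ℤ, c t = 2 * π * k := by
      intro t ht
      apply real_of_exp_eq_one
      rw [hcdef]
      simp only []
      rw [Complex.ofReal_sub, sub_mul, Complex.exp_sub, ← hΘe 0 t ht, ← hΘe 0 0 h0mem,
        hW0 t]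
      exact div_self (hWne 0 0)
    have hc01 : c 0 = c 1 := helperA zero_le_one hccont.continuousOn hcint
    have e0 : c 0 = 0 := sub_self _
    rw [hNNdef]
    simp only []
    have e1 : c 1 = Θ 0 1 - Θ 0 0 := rfl
    rw [e1] at hc01
    linarith [e0 ▸ hc01]
  -- NN 1 = 2 π m
  have hNN1 : NN 1 = 2 * π * m := by
    have hW1 : ∀ t ∈ Set.Icc (0:ℝ) 1, W 1 t = Complex.exp ((2 * π * m * t : ℝ) * Complex.I) := by
      intro t ht
      have hval : ((pt 1 (myClamp t) : ℂ)) = ecirc t := by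
        simp only [hptdef, myClamp_one, Complex.ofReal_one, one_mul, myClamp_of_mem ht]
      have hbdry : ‖(pt 1 (myClamp t) : ℂ)‖ = 1 := by rw [hval]; exact ecirc_norm t
      rw [hWdef]
      simp only []
      rw [hwb _ hbdry, hval]
      rw [ecirc]
      rw [← Complex.exp_nat_mul]
      congr 1
      push_cast
      ring
    set c : ℝ → ℝ := fun t => Θ 1 t - 2 * π * m * t with hcdef
    have hccont : Continuous c := (hΘc 1).sub (continuous_const.mul continuous_id)
    have hcint : ∀ t ∈ Set.Icc (0:ℝ) 1, ∃ k : ℤ, c t = 2 * π * k := by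
      intro t ht
      apply real_of_exp_eq_one
      rw [hcdef]
      simp only []
      rw [Complex.ofReal_sub, sub_mul, Complex.exp_sub, ← hΘe 1 t ht, hW1 t ht]
      exact div_self (Complex.exp_ne_zero _)
    have hc01 : c 0 = c 1 := helperA zero_le_one hccont.continuousOn hcint
    have e0 : c 0 = Θ 1 0 := by rw [hcdef]; simp
    have e1 : c 1 = Θ 1 1 - 2 * π * m := by rw [hcdef]; simp
    rw [hNNdef]
    simp only []
    rw [e0, e1] at hc01
    linarith
  -- conclusion
  have hfinal : NN 0 = NN 1 :=
    helperA zero_le_one hNNcont.continuousOn fun s _ => hNNint s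
  rw [hNN0, hNN1] at hfinal
  have hmr : (1:ℝ) ≤ m := by exact_mod_cast hm1
  nlinarith
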